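/- (Instance of Theorem 3.2 of the paper for the 3-ball.) For every R > 0, the survival probability S₃(t) = ∫_0^R 4π r² · g(r, t) dr is differentiable at every t > 0 and satisfies S₃'(t) = −f₃^exit(t); that is, the exit-time density of the 3-ball equals minus the time derivative of the total mass of the forward Kolmogorov solution. -/

import Mathlib

open Real Filter Topology MeasureTheory

/-- Radially symmetric forward Kolmogorov solution for a standard 3-dimensional
Brownian motion started at the center of the ball of radius `R` and killed at its
boundary. -/
noncomputable def g (R r t : ℝ) : ℝ :=
  ∑' k : ℕ, (((k : ℝ) + 1) * π / (2 * π * R ^ 2 * r)) *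
    Real.sin (((k : ℝ) + 1) * π * r / R) *
    Real.exp (-(((k : ℝ) + 1) ^ 2 * π ^ 2 * t) / (2 * R ^ 2))

/-- Exit-time density of a standard 3-dimensional Brownian motion started at the
center of the ball of radius `R` and killed at its boundary:
`f₃^exit(t) = (π²/R²) ∑_{k≥1} (-1)^{k+1} k² exp(-k²π²t/(2R²))`. -/
noncomputable def f₃exit (R t : ℝ) : ℝ :=
  (π ^ 2 / R ^ 2) * ∑' k : ℕ, (-1 : ℝ) ^ k * ((k : ℝ) + 1) ^ 2 *
    Real.exp (-(((k : ℝ) + 1) ^ 2 * π ^ 2 * t) / (2 * R ^ 2))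

lemma summable_aux (c : ℝ) (hc : 0 < c) (p : ℕ) :
    Summable (fun k : ℕ => ((k : ℝ) + 1) ^ p * Real.exp (-(((k : ℝ) + 1) ^ 2 * c))) := by
  have hr : ‖Real.exp (-c)‖ < 1 := by
    rw [Real.norm_eq_abs, abs_of_pos (Real.exp_pos _)]
    exact Real.exp_lt_one_iff.mpr (by linarith)
  have h := summable_pow_mul_geometric_of_norm_lt_one (R := ℝ) p hr
  have h2 := (summable_nat_add_iff 1).mpr h
  refine Summable.of_nonneg_of_le (fun k => by positivity) (fun k => ?_) h2
  have hk1 : (0:ℝ) ≤ (k:ℝ) := Nat.cast_nonneg k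
  have hexp : Real.exp (-(((k : ℝ) + 1) ^ 2 * c)) ≤ Real.exp (-c) ^ (k + 1) := by
    rw [← Real.exp_nat_mul]
    apply Real.exp_le_exp.mpr
    push_cast
    nlinarith [mul_nonneg (mul_nonneg hk1 (by linarith : (0:ℝ) ≤ (k:ℝ)+1)) hc.le]
  calc ((k : ℝ) + 1) ^ p * Real.exp (-(((k : ℝ) + 1) ^ 2 * c))
      ≤ ((k : ℝ) + 1) ^ p * Real.exp (-c) ^ (k + 1) := by
        apply mul_le_mul_of_nonneg_left hexp (by positivity)
    _ = ((k + 1 : ℕ) : ℝ) ^ p * Real.exp (-c) ^ (k + 1) := by push_cast; ring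

lemma integral_r_sin (b : ℝ) (hb : b ≠ 0) (R : ℝ) :
    ∫ r in (0:ℝ)..R, r * Real.sin (b * r) =
      Real.sin (b * R) / b ^ 2 - R * Real.cos (b * R) / b := by
  have key : ∀ x : ℝ, HasDerivAt (fun r => Real.sin (b * r) / b ^ 2 - r * Real.cos (b * r) / b)
      (x * Real.sin (b * x)) x := by
    intro x
    have hs : HasDerivAt (fun r : ℝ => Real.sin (b * r)) (Real.cos (b * x) * b) x := by
      simpa [Function.comp_def] using (Real.hasDerivAt_sin (b * x)).comp x ((hasDerivAt_id x).const_mul b)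
    have hc : HasDerivAt (fun r : ℝ => Real.cos (b * r)) (-Real.sin (b * x) * b) x := by
      simpa [Function.comp_def] using (Real.hasDerivAt_cos (b * x)).comp x ((hasDerivAt_id x).const_mul b)
    have h := (hs.div_const (b ^ 2)).sub (((hasDerivAt_id x).mul hc).div_const b)
    convert h using 1
    iterate 3 rfl
    simp only [id_eq]
    field_simp
    ring
  rw [intervalIntegral.integral_eq_sub_of_hasDerivAt (fun x _ => key x)
    ((by continuity : Continuous fun r : ℝ => r * Real.sin (b * r)).intervalIntegrable 0 R)]
  simp

lemma step_A (R : ℝ) (hR : 0 < R) (s : ℝ) (hs : 0 < s) :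
    (∫ r in (0:ℝ)..R, 4 * π * r ^ 2 * g R r s) =
    ∑' k : ℕ, 2 * (-1:ℝ) ^ k * Real.exp (-(((k : ℝ) + 1) ^ 2 * π ^ 2 * s) / (2 * R ^ 2)) := by
  have hR0 : R ≠ 0 := ne_of_gt hR
  have hπ : (0:ℝ) < π := pi_pos
  set a : ℕ → ℝ → ℝ := fun k r =>
    ((2 * ((k : ℝ) + 1) * π / R ^ 2) *
      Real.exp (-(((k : ℝ) + 1) ^ 2 * π ^ 2 * s) / (2 * R ^ 2))) *
      (r * Real.sin ((((k : ℝ) + 1) * π / R) * r)) with ha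
  have hpt : ∀ r : ℝ, 4 * π * r ^ 2 * g R r s = ∑' k : ℕ, a k r := by
    intro r
    rw [g, ← tsum_mul_left]
    refine tsum_congr fun k => ?_
    by_cases hr : r = 0
    · subst hr; simp [ha]
    · simp only [ha]
      rw [show (((k : ℝ) + 1) * π / R) * r = ((k : ℝ) + 1) * π * r / R from by ring]
      field_simp
      ring
  have hcont : ∀ k : ℕ, Continuous (a k) := by
    intro k; rw [ha]; continuity
  have hint : ∀ k : ℕ, IntegrableOn (a k) (Set.Ioc 0 R) volume :=
    fun k => (hcont k).integrableOn_Ioc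
  have hCpos : ∀ k : ℕ, 0 < (2 * ((k : ℝ) + 1) * π / R ^ 2) *
      Real.exp (-(((k : ℝ) + 1) ^ 2 * π ^ 2 * s) / (2 * R ^ 2)) := by
    intro k; positivity
  have hbound : ∀ k : ℕ, ∀ r ∈ Set.Ioc (0:ℝ) R, ‖a k r‖ ≤
      ((2 * ((k : ℝ) + 1) * π / R ^ 2) *
        Real.exp (-(((k : ℝ) + 1) ^ 2 * π ^ 2 * s) / (2 * R ^ 2))) * R := by
    intro k r hr
    simp only [ha, Real.norm_eq_abs, abs_mul]
    rw [abs_of_pos (show (0:ℝ) < 2 * ((k : ℝ) + 1) * π / R ^ 2 from by positivity),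
      abs_of_pos (Real.exp_pos _)]
    apply mul_le_mul_of_nonneg_left _ (hCpos k).le
    calc |r| * |Real.sin ((((k : ℝ) + 1) * π / R) * r)| ≤ R * 1 := by
          apply mul_le_mul
          · rw [abs_of_pos hr.1]; exact hr.2
          · exact abs_le.mpr ⟨Real.neg_one_le_sin _, Real.sin_le_one _⟩
          · exact abs_nonneg _
          · exact hR.le
      _ = R := mul_one R
  have hsum : Summable fun k : ℕ => ∫ r in Set.Ioc (0:ℝ) R, ‖a k r‖ := by
    have hS : Summable fun k : ℕ =>
        (((2 * ((k : ℝ) + 1) * π / R ^ 2) *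
          Real.exp (-(((k : ℝ) + 1) ^ 2 * π ^ 2 * s) / (2 * R ^ 2))) * R) * R := by
      have h := (summable_aux (π ^ 2 * s / (2 * R ^ 2)) (by positivity) 1).mul_left
        ((2 * π / R ^ 2) * R * R)
      refine h.congr fun k => ?_
      rw [show -(((k : ℝ) + 1) ^ 2 * π ^ 2 * s) / (2 * R ^ 2)
        = -(((k : ℝ) + 1) ^ 2 * (π ^ 2 * s / (2 * R ^ 2))) from by ring]
      ring
    refine Summable.of_nonneg_of_le
      (fun k => integral_nonneg fun r => norm_nonneg _) (fun k => ?_) hS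
    calc (∫ r in Set.Ioc (0:ℝ) R, ‖a k r‖)
        ≤ ∫ _r in Set.Ioc (0:ℝ) R, (((2 * ((k : ℝ) + 1) * π / R ^ 2) *
            Real.exp (-(((k : ℝ) + 1) ^ 2 * π ^ 2 * s) / (2 * R ^ 2))) * R) := by
          apply setIntegral_mono_on (hint k).norm (integrableOn_const
            (by rw [Real.volume_Ioc]; exact ENNReal.ofReal_ne_top))
            measurableSet_Ioc
          intro r hr
          exact hbound k r hr
      _ = (((2 * ((k : ℝ) + 1) * π / R ^ 2) *
            Real.exp (-(((k : ℝ) + 1) ^ 2 * π ^ 2 * s) / (2 * R ^ 2))) * R) * R := by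
          rw [setIntegral_const]
          rw [Real.volume_real_Ioc_of_le hR.le, sub_zero, smul_eq_mul]
          ring
  have hval : ∀ k : ℕ, (∫ r in Set.Ioc (0:ℝ) R, a k r)
      = 2 * (-1:ℝ) ^ k * Real.exp (-(((k : ℝ) + 1) ^ 2 * π ^ 2 * s) / (2 * R ^ 2)) := by
    intro k
    have hk0 : ((k : ℝ) + 1) ≠ 0 := by positivity
    have hb : (((k : ℝ) + 1) * π / R) ≠ 0 := by positivity
    rw [← intervalIntegral.integral_of_le hR.le, ha]
    rw [intervalIntegral.integral_const_mul, integral_r_sin _ hb R]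
    have hbR : (((k : ℝ) + 1) * π / R) * R = ((k : ℝ) + 1) * π :=
      div_mul_cancel₀ _ hR0
    rw [hbR]
    have hsin : Real.sin (((k : ℝ) + 1) * π) = 0 := by
      have := Real.sin_nat_mul_pi (k + 1); push_cast at this; exact this
    have hcos : Real.cos (((k : ℝ) + 1) * π) = (-1 : ℝ) ^ (k + 1) := by
      have := Real.cos_nat_mul_pi_sub 0 (k + 1)
      push_cast at this
      simpa using this
    rw [hsin, hcos]
    field_simp
    ring
  calc (∫ r in (0:ℝ)..R, 4 * π * r ^ 2 * g R r s)
      = ∫ r in Set.Ioc (0:ℝ) R, ∑' k : ℕ, a k r := by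
        rw [intervalIntegral.integral_of_le hR.le]
        exact setIntegral_congr_fun measurableSet_Ioc fun r _ => hpt r
    _ = ∑' k : ℕ, ∫ r in Set.Ioc (0:ℝ) R, a k r :=
        (integral_tsum_of_summable_integral_norm hint hsum).symm
    _ = ∑' k : ℕ, 2 * (-1:ℝ) ^ k *
          Real.exp (-(((k : ℝ) + 1) ^ 2 * π ^ 2 * s) / (2 * R ^ 2)) :=
        tsum_congr hval

lemma step_B (R : ℝ) (hR : 0 < R) (t : ℝ) (ht : 0 < t) :
    HasDerivAt (fun s => ∑' k : ℕ, 2 * (-1:ℝ) ^ k *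
        Real.exp (-(((k : ℝ) + 1) ^ 2 * π ^ 2 * s) / (2 * R ^ 2)))
      (-(f₃exit R t)) t := by
  have hR0 : R ≠ 0 := ne_of_gt hR
  set G : ℕ → ℝ → ℝ := fun k s => 2 * (-1:ℝ) ^ k *
    Real.exp (-(((k : ℝ) + 1) ^ 2 * π ^ 2 * s) / (2 * R ^ 2)) with hG
  set G' : ℕ → ℝ → ℝ := fun k s => 2 * (-1:ℝ) ^ k *
    ((-(((k : ℝ) + 1) ^ 2 * π ^ 2) / (2 * R ^ 2)) *
      Real.exp (-(((k : ℝ) + 1) ^ 2 * π ^ 2 * s) / (2 * R ^ 2))) with hG'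
  set u : ℕ → ℝ := fun k => (π ^ 2 / R ^ 2) * (((k : ℝ) + 1) ^ 2 *
    Real.exp (-(((k : ℝ) + 1) ^ 2 * π ^ 2 * (t / 2)) / (2 * R ^ 2))) with hu_def
  have hu : Summable u := by
    have h := (summable_aux (π ^ 2 * (t / 2) / (2 * R ^ 2)) (by positivity) 2).mul_left
      (π ^ 2 / R ^ 2)
    refine h.congr fun k => ?_
    simp only [hu_def]
    rw [show -(((k : ℝ) + 1) ^ 2 * π ^ 2 * (t / 2)) / (2 * R ^ 2)
      = -(((k : ℝ) + 1) ^ 2 * (π ^ 2 * (t / 2) / (2 * R ^ 2))) from by ring]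
  have hg : ∀ (k : ℕ) (y : ℝ), y ∈ Set.Ioi (t / 2) → HasDerivAt (G k) (G' k y) y := by
    intro k y _
    have hfun : G k = fun s => 2 * (-1:ℝ) ^ k *
        Real.exp ((-(((k : ℝ) + 1) ^ 2 * π ^ 2) / (2 * R ^ 2)) * s) := by
      funext s
      simp only [hG]
      rw [show -(((k : ℝ) + 1) ^ 2 * π ^ 2 * s) / (2 * R ^ 2)
        = (-(((k : ℝ) + 1) ^ 2 * π ^ 2) / (2 * R ^ 2)) * s from by ring]
    have h := (((hasDerivAt_id y).const_mul
      ((-(((k : ℝ) + 1) ^ 2 * π ^ 2)) / (2 * R ^ 2))).exp).const_mul (2 * (-1:ℝ) ^ k)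
    rw [hfun]
    convert h using 1
    iterate 3 rfl
    simp only [hG', id_eq, mul_one]
    rw [show -(((k : ℝ) + 1) ^ 2 * π ^ 2 * y) / (2 * R ^ 2)
      = (-(((k : ℝ) + 1) ^ 2 * π ^ 2) / (2 * R ^ 2)) * y from by ring]
    ring
  have hg' : ∀ (k : ℕ) (y : ℝ), y ∈ Set.Ioi (t / 2) → ‖G' k y‖ ≤ u k := by
    intro k y hy
    have hyt : t / 2 ≤ y := le_of_lt hy
    have hmono : Real.exp (-(((k : ℝ) + 1) ^ 2 * π ^ 2 * y) / (2 * R ^ 2)) ≤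
        Real.exp (-(((k : ℝ) + 1) ^ 2 * π ^ 2 * (t / 2)) / (2 * R ^ 2)) := by
      apply Real.exp_le_exp.mpr
      have h2R : (0:ℝ) < 2 * R ^ 2 := by positivity
      rw [div_le_div_iff_of_pos_right h2R]
      apply neg_le_neg
      exact mul_le_mul_of_nonneg_left hyt (by positivity)
    calc ‖G' k y‖ = (π ^ 2 / R ^ 2) * (((k : ℝ) + 1) ^ 2 *
          Real.exp (-(((k : ℝ) + 1) ^ 2 * π ^ 2 * y) / (2 * R ^ 2))) := by
          rw [hG']
          simp only [Real.norm_eq_abs, abs_mul, abs_div, abs_neg, abs_pow, abs_two,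
            Real.abs_exp, abs_one, abs_neg]
          rw [abs_of_nonneg (by positivity : (0:ℝ) ≤ (k:ℝ) + 1),
            abs_of_nonneg Real.pi_pos.le, abs_of_nonneg hR.le]
          ring
      _ ≤ u k := by
          rw [hu_def]
          apply mul_le_mul_of_nonneg_left _ (by positivity)
          exact mul_le_mul_of_nonneg_left hmono (by positivity)
  have hg0 : Summable fun k : ℕ => G k t := by
    apply Summable.of_norm
    have h := (summable_aux (π ^ 2 * t / (2 * R ^ 2)) (by positivity) 0).mul_left 2
    refine h.congr fun k => ?_
    rw [hG]
    simp only [pow_zero, one_mul, Real.norm_eq_abs, abs_mul, abs_pow, abs_neg, abs_one,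
      Real.abs_exp, abs_two, one_pow, mul_one]
    rw [show -(((k : ℝ) + 1) ^ 2 * π ^ 2 * t) / (2 * R ^ 2)
      = -(((k : ℝ) + 1) ^ 2 * (π ^ 2 * t / (2 * R ^ 2))) from by ring]
  have hder := hasDerivAt_tsum_of_isPreconnected hu isOpen_Ioi
    (convex_Ioi (t / 2)).isPreconnected hg hg'
    (Set.mem_Ioi.mpr (half_lt_self ht)) hg0 (Set.mem_Ioi.mpr (half_lt_self ht))
  have hval : (∑' k : ℕ, G' k t) = -(f₃exit R t) := by
    rw [f₃exit, ← tsum_mul_left, ← tsum_neg]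
    refine tsum_congr fun k => ?_
    rw [hG']
    ring
  rw [← hval]
  exact hder

/-- The survival probability `S₃(t) = ∫_0^R 4πr² g(r, t) dr` is differentiable at
every `t > 0` with `S₃'(t) = -f₃^exit(t)`. -/
theorem survival₃_hasDerivAt_neg_exit (R : ℝ) (hR : 0 < R) (t : ℝ) (ht : 0 < t) :
    HasDerivAt (fun s => ∫ r in (0 : ℝ)..R, 4 * π * r ^ 2 * g R r s)
      (-(f₃exit R t)) t := by
  refine (step_B R hR t ht).congr_of_eventuallyEq ?_
  filter_upwards [Ioi_mem_nhds ht] with s hs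
  exact step_A R hR s hs
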